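/- arXiv:2601.07147 — 2 statements merged into one kernel-verified Lean document; each statement's English description precedes it below -/
import Mathlib

section
/- Let X_1,...,X_M be independent Bernoulli variables with Pr(X_m=1) = p_m, S = Σ X_m, and T ≥ 1 an integer with T ≤ M. Then Pr(S ≥ T) = Σ_{k=T}^{M} (−1)^{k+T} C(k−1, T−1) ξ_k(p_1,...,p_M), where ξ_k is the k-th elementary symmetric polynomial. -/
open MeasureTheory ProbabilityTheory Finset

lemma pbt_alt_zero {s j : ℕ} (hj : j < s) :
    ∑ k ∈ Icc j s, (-1:ℝ)^k * (s.choose k) * (k.choose j) = 0 := by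
  have h1 : ∀ k ∈ Icc j s, (-1:ℝ)^k * (s.choose k) * (k.choose j)
      = (-1:ℝ)^k * (s.choose j) * ((s-j).choose (k-j)) := by
    intro k hk
    rw [mem_Icc] at hk
    have h2 : s.choose k * k.choose j = s.choose j * (s-j).choose (k-j) :=
      Nat.choose_mul hk.1
    have h2' : ((s.choose k : ℝ)) * (k.choose j) = (s.choose j) * ((s-j).choose (k-j)) := by
      exact_mod_cast congrArg (Nat.cast : ℕ → ℝ) h2
    rw [mul_assoc, h2']; ring
  rw [Finset.sum_congr rfl h1]
  have : Icc j s = Ico j (s+1) := rfl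
  rw [this, Finset.sum_Ico_eq_sum_range, show s + 1 - j = (s - j) + 1 by omega]
  have : ∀ i ∈ range (s-j+1), (-1:ℝ)^(j+i) * (s.choose j) * ((s-j).choose (j+i-j))
      = ((-1:ℝ)^j * (s.choose j)) * ((-1:ℝ)^i * ((s-j).choose i)) := by
    intro i hi
    rw [show j + i - j = i by omega, pow_add]; ring
  rw [Finset.sum_congr rfl this, ← Finset.mul_sum]
  have h0 : (∑ i ∈ range (s-j+1), (-1:ℝ)^i * ((s-j).choose i)) = 0 := by
    have := congrArg (Int.cast : ℤ → ℝ)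
      (Int.alternating_sum_range_choose_of_ne (n := s - j) (by omega))
    push_cast at this
    exact this
  rw [h0, mul_zero]

lemma pbt_waring_one {T : ℕ} (hT1 : 1 ≤ T) : ∀ s, T ≤ s →
    ∑ k ∈ Icc T s, (-1:ℝ)^(k+T) * ((k-1).choose (T-1)) * (s.choose k) = 1 := by
  intro s
  induction s with
  | zero => omega
  | succ s ih =>
    intro hTs
    rcases Nat.lt_or_ge s T with h | h
    · have hsT : s + 1 = T := by omega
      subst hsT
      rw [Finset.Icc_self, Finset.sum_singleton]
      simp [Nat.choose_self, ← two_mul, pow_mul]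
    · have key : ∀ k ∈ Icc T (s+1), (-1:ℝ)^(k+T) * ((k-1).choose (T-1)) * ((s+1).choose k)
          = (-1:ℝ)^(k+T) * ((k-1).choose (T-1)) * (s.choose k)
            + (-1:ℝ)^(k+T) * ((k-1).choose (T-1)) * (s.choose (k-1)) := by
        intro k hk
        rw [mem_Icc] at hk
        obtain ⟨j, rfl⟩ : ∃ j, k = j + 1 := ⟨k - 1, by omega⟩
        have : (s+1).choose (j+1) = s.choose (j+1) + s.choose j := by
          rw [Nat.choose_succ_succ, Nat.add_comm]
        rw [this, show j + 1 - 1 = j from rfl]; push_cast; ring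
      rw [Finset.sum_congr rfl key, Finset.sum_add_distrib]
      have hA : ∑ k ∈ Icc T (s+1), (-1:ℝ)^(k+T) * ((k-1).choose (T-1)) * (s.choose k)
          = ∑ k ∈ Icc T s, (-1:ℝ)^(k+T) * ((k-1).choose (T-1)) * (s.choose k) := by
        rw [← Finset.insert_Icc_right_eq_Icc_add_one (by omega), Finset.sum_insert (by simp)]
        simp [Nat.choose_eq_zero_of_lt (by omega : s < s + 1)]
      have hB : ∑ k ∈ Icc T (s+1), (-1:ℝ)^(k+T) * ((k-1).choose (T-1)) * (s.choose (k-1)) = 0 := by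
        rw [show Icc T (s+1) = Ico T (s+2) from rfl, Finset.sum_Ico_eq_sum_range,
          show s + 2 - T = (s + 1 - T) + 1 by omega]
        have hz := pbt_alt_zero (s := s) (j := T - 1) (by omega)
        rw [show Icc (T-1) s = Ico (T-1) (s+1) from rfl, Finset.sum_Ico_eq_sum_range,
          show s + 1 - (T-1) = s + 1 - T + 1 by omega] at hz
        have : ∀ i ∈ range (s + 1 - T + 1),
            (-1:ℝ)^(T + i + T) * ((T + i - 1).choose (T-1)) * (s.choose (T + i - 1))
            = (-1:ℝ)^(T-1) * ((-1:ℝ)^(T - 1 + i) * (s.choose (T-1+i)) * ((T-1+i).choose (T-1))) := by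
          intro i hi
          rw [show T + i - 1 = T - 1 + i by omega,
            show T + i + T = (T - 1) + (T - 1 + i) + 2 by omega, pow_add, pow_add, pow_add]
          ring
        rw [Finset.sum_congr rfl this, ← Finset.mul_sum, hz, mul_zero]
      rw [hA, hB, add_zero]
      exact ih h

lemma pbt_waring_full {T s M : ℕ} (hT1 : 1 ≤ T) (hsM : s ≤ M) :
    (if T ≤ s then (1:ℝ) else 0)
      = ∑ k ∈ Icc T M, (-1:ℝ)^(k+T) * ((k-1).choose (T-1)) * (s.choose k) := by
  by_cases h : T ≤ s
  · rw [if_pos h]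
    refine (pbt_waring_one hT1 s h).symm.trans ?_
    apply Finset.sum_subset (Finset.Icc_subset_Icc_right hsM)
    intro k hk hk'
    rw [mem_Icc] at hk hk'
    rw [Nat.choose_eq_zero_of_lt (show s < k by omega)]
    norm_num
  · rw [if_neg h]
    refine (Finset.sum_eq_zero fun k hk => ?_).symm
    rw [mem_Icc] at hk
    rw [Nat.choose_eq_zero_of_lt (show s < k by omega)]
    norm_num

lemma pbt_sum_prod_choose {M : ℕ} (x : Fin M → ℕ) (hx : ∀ m, x m ≤ 1) (k : ℕ) :
    ∑ A ∈ (univ : Finset (Fin M)).powersetCard k, ∏ m ∈ A, (x m : ℝ)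
      = ((∑ m, x m).choose k : ℝ) := by
  classical
  set t : Finset (Fin M) := univ.filter (fun m => x m = 1) with ht
  have hs : ∑ m, x m = t.card := by
    rw [ht, ← Finset.sum_filter_add_sum_filter_not univ (fun m => x m = 1) x]
    have h1 : ∑ m ∈ univ.filter (fun m => x m = 1), x m
        = (univ.filter (fun m => x m = 1)).card := by
      rw [Finset.card_eq_sum_ones]
      exact Finset.sum_congr rfl fun m hm => (Finset.mem_filter.1 hm).2
    have h2 : ∑ m ∈ univ.filter (fun m => ¬ x m = 1), x m = 0 := by
      refine Finset.sum_eq_zero fun m hm => ?_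
      have := (Finset.mem_filter.1 hm).2
      have := hx m
      omega
    rw [h1, h2, add_zero]
  have hterm : ∀ A ∈ (univ : Finset (Fin M)).powersetCard k,
      ∏ m ∈ A, (x m : ℝ) = if A ⊆ t then 1 else 0 := by
    intro A _
    by_cases h : A ⊆ t
    · rw [if_pos h]
      refine Finset.prod_eq_one fun m hm => ?_
      have := (Finset.mem_filter.1 (h hm)).2
      rw [this]; norm_num
    · rw [if_neg h]
      obtain ⟨m, hm, hmn⟩ := Finset.not_subset.1 h
      refine Finset.prod_eq_zero hm ?_
      have h1 : ¬ x m = 1 := fun hx1 => hmn (Finset.mem_filter.2 ⟨Finset.mem_univ m, hx1⟩)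
      have := hx m
      have : x m = 0 := by omega
      rw [this]; norm_num
  rw [Finset.sum_congr rfl hterm, Finset.sum_boole]
  have hfil : ((univ : Finset (Fin M)).powersetCard k).filter (· ⊆ t) = t.powersetCard k := by
    ext A
    simp only [Finset.mem_filter, Finset.mem_powersetCard]
    constructor
    · rintro ⟨⟨-, hc⟩, hsub⟩; exact ⟨hsub, hc⟩
    · rintro ⟨hsub, hc⟩; exact ⟨⟨Finset.subset_univ A, hc⟩, hsub⟩
  rw [hfil, Finset.card_powersetCard, hs]

lemma pbt_prod_as_indicator {Ω : Type*} (M : ℕ) (X : Fin M → Ω → ℕ)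
    (hval : ∀ m ω, X m ω ≤ 1) (A : Finset (Fin M)) :
    (fun ω => ∏ m ∈ A, (X m ω : ℝ))
      = Set.indicator (⋂ m ∈ A, X m ⁻¹' ({1} : Set ℕ)) (fun _ => 1) := by
  funext ω
  by_cases h : ∀ m ∈ A, X m ω = 1
  · rw [Set.indicator_of_mem (by simpa [Set.mem_iInter] using h)]
    exact Finset.prod_eq_one fun m hm => by rw [h m hm]; norm_num
  · push_neg at h
    obtain ⟨m, hm, hne⟩ := h
    rw [Set.indicator_of_notMem (by
      simp only [Set.mem_iInter, Set.mem_preimage, Set.mem_singleton_iff]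
      push_neg
      exact ⟨m, hm, hne⟩)]
    refine Finset.prod_eq_zero hm ?_
    have := hval m ω
    have : X m ω = 0 := by omega
    rw [this]; norm_num

/-- `esp M k x` is the `k`-th elementary symmetric polynomial of `x : Fin M → ℝ`. -/
def esp (M k : ℕ) (x : Fin M → ℝ) : ℝ :=
  ∑ S ∈ Finset.univ.powersetCard k, ∏ m ∈ S, x m

/-- Waring-type inclusion–exclusion formula for the tail of a
Poisson–binomial distribution. -/
theorem poisson_binomial_tail {Ω : Type*} [MeasurableSpace Ω]
    (μ : Measure Ω) [IsProbabilityMeasure μ]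
    (M : ℕ) (X : Fin M → Ω → ℕ) (p : Fin M → ℝ)
    (hmeas : ∀ m, Measurable (X m))
    (hval : ∀ m ω, X m ω ≤ 1)
    (hindep : iIndepFun X μ)
    (hp : ∀ m, (μ {ω | X m ω = 1}).toReal = p m)
    (T : ℕ) (hT1 : 1 ≤ T) (hTM : T ≤ M) :
    (μ {ω | T ≤ ∑ m, X m ω}).toReal =
      ∑ k ∈ Finset.Icc T M,
        (-1 : ℝ) ^ (k + T) * (Nat.choose (k - 1) (T - 1) : ℝ) * esp M k p := by
  classical
  -- measurability of events
  have hEA : ∀ A : Finset (Fin M), MeasurableSet (⋂ m ∈ A, X m ⁻¹' ({1} : Set ℕ)) := by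
    intro A
    exact MeasurableSet.biInter A.countable_toSet
      (fun m _ => (hmeas m) (measurableSet_singleton 1))
  -- integral of the products
  have hint : ∀ A : Finset (Fin M), ∫ ω, ∏ m ∈ A, (X m ω : ℝ) ∂μ = ∏ m ∈ A, p m := by
    intro A
    rw [pbt_prod_as_indicator M X hval A]
    have h2 : (∫ ω, Set.indicator (⋂ m ∈ A, X m ⁻¹' ({1} : Set ℕ)) (fun _ => (1:ℝ)) ω ∂μ)
        = (μ (⋂ m ∈ A, X m ⁻¹' ({1} : Set ℕ))).toReal := integral_indicator_one (hEA A)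
    refine h2.trans ?_
    rw [hindep.measure_inter_preimage_eq_mul A (fun m _ => measurableSet_singleton 1),
      ENNReal.toReal_prod]
    refine Finset.prod_congr rfl fun m _ => ?_
    rw [← hp m]
    rfl
  -- integrability of the products
  have hintg : ∀ A : Finset (Fin M), Integrable (fun ω => ∏ m ∈ A, (X m ω : ℝ)) μ := by
    intro A
    rw [pbt_prod_as_indicator M X hval A]
    exact (integrable_indicator_iff (hEA A)).2
      (integrableOn_const (measure_ne_top μ _))
  -- main event measurable
  have hS : Measurable (fun ω => ∑ m, X m ω) :=
    Finset.measurable_sum _ fun m _ => hmeas m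
  have hEset : MeasurableSet {ω | T ≤ ∑ m, X m ω} := hS measurableSet_Ici
  -- pointwise identity
  have hpt : ∀ ω, Set.indicator {ω | T ≤ ∑ m, X m ω} (1 : Ω → ℝ) ω
      = ∑ k ∈ Finset.Icc T M, ∑ A ∈ (univ : Finset (Fin M)).powersetCard k,
          ((-1:ℝ)^(k+T) * (((k-1).choose (T-1) : ℕ) : ℝ)) * ∏ m ∈ A, (X m ω : ℝ) := by
    intro ω
    have hsM : (∑ m, X m ω) ≤ M := by
      calc ∑ m, X m ω ≤ ∑ _m : Fin M, 1 := Finset.sum_le_sum fun m _ => hval m ω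
      _ = M := by simp
    have h1 : Set.indicator {ω | T ≤ ∑ m, X m ω} (1 : Ω → ℝ) ω
        = if T ≤ ∑ m, X m ω then 1 else 0 := by
      rw [Set.indicator_apply]
      rfl
    rw [h1, pbt_waring_full hT1 hsM]
    refine Finset.sum_congr rfl fun k hk => ?_
    rw [← pbt_sum_prod_choose (fun m => X m ω) (fun m => hval m ω) k, Finset.mul_sum]
  -- compute
  rw [← measureReal_def, ← integral_indicator_one hEset]
  simp only [hpt]
  rw [integral_finset_sum _ (fun k _ =>
      integrable_finset_sum _ (fun A _ => (hintg A).const_mul _))]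
  refine Finset.sum_congr rfl fun k hk => ?_
  rw [integral_finset_sum _ (fun A _ => (hintg A).const_mul _)]
  have : ∀ A ∈ (univ : Finset (Fin M)).powersetCard k,
      ∫ ω, ((-1:ℝ)^(k+T) * (((k-1).choose (T-1) : ℕ) : ℝ)) * ∏ m ∈ A, (X m ω : ℝ) ∂μ
      = ((-1:ℝ)^(k+T) * (((k-1).choose (T-1) : ℕ) : ℝ)) * ∏ m ∈ A, p m := by
    intro A _
    rw [integral_const_mul, hint A]
  rw [Finset.sum_congr rfl this, ← Finset.mul_sum, esp]
end

section
/- Fix M ≥ 1 and T = ⌊M/2⌋ + 1. In the majority-voting fusion setup, if all miss-detection probabilities vanish (P_md,m = 0 for all m), then P_dep = Pr(Σ_{m} X_m ≥ T) = Σ_{k=T}^{M} (−1)^{k+T} C(k−1, T−1) ξ_k(P_fa,1,...,P_fa,M). -/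
open MeasureTheory ProbabilityTheory Finset

lemma dep_alt_partial (j t : ℕ) (hj : 1 ≤ j) :
    ∑ a ∈ range (t+1), (-1:ℝ)^a * (j.choose a : ℝ) = (-1)^t * ((j-1).choose t : ℝ) := by
  obtain ⟨j, rfl⟩ := Nat.exists_eq_add_of_le hj
  simp only [Nat.add_sub_cancel_left] at *
  induction t with
  | zero => simp
  | succ t ih =>
    rw [sum_range_succ, ih]
    have h : (1 + j).choose (t+1) = j.choose t + j.choose (t+1) := by
      rw [Nat.add_comm 1 j, Nat.choose_succ_succ]
    rw [h]
    push_cast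
    ring

lemma dep_alt_tail (j T : ℕ) (hT1 : 1 ≤ T) (hTj : T ≤ j) :
    ∑ a ∈ Icc T j, (-1:ℝ)^a * (j.choose a : ℝ) = (-1)^T * ((j-1).choose (T-1) : ℝ) := by
  have hj : 1 ≤ j := le_trans hT1 hTj
  have htot : ∑ a ∈ range (j+1), (-1:ℝ)^a * (j.choose a : ℝ) = 0 := by
    have := Int.alternating_sum_range_choose_of_ne (n := j) (by omega)
    have := congrArg (fun z : ℤ => (z : ℝ)) this
    push_cast at this
    convert this using 2 with a
  obtain ⟨s, rfl⟩ := Nat.exists_eq_add_of_le hT1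
  have hIcc : Icc (1+s) j = Ico (1+s) (j+1) := by rw [Finset.Ico_add_one_right_eq_Icc]
  rw [hIcc, Finset.sum_Ico_eq_sub _ (by omega), htot]
  rw [show 1 + s = s + 1 by omega, dep_alt_partial j s hj]
  simp only [Nat.add_sub_cancel]
  ring

lemma dep_inner_sum {α : Type*} [DecidableEq α] (T : ℕ) (hT1 : 1 ≤ T) (S : Finset α) :
    ∑ A ∈ S.powerset, (if T ≤ A.card then ((-1:ℝ))^((S \ A).card) else 0)
      = if T ≤ S.card then (-1:ℝ)^(S.card + T) * ((S.card - 1).choose (T-1) : ℝ) else 0 := by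
  rw [Finset.sum_powerset]
  have step1 : ∀ j ∈ range (S.card + 1),
      ∑ A ∈ S.powersetCard j, (if T ≤ A.card then ((-1:ℝ))^((S \ A).card) else 0)
        = (S.card.choose j : ℝ) * (if T ≤ j then ((-1:ℝ))^(S.card - j) else 0) := by
    intro j hj
    rw [mem_range] at hj
    have : ∀ A ∈ S.powersetCard j,
        (if T ≤ A.card then ((-1:ℝ))^((S \ A).card) else 0)
          = (if T ≤ j then ((-1:ℝ))^(S.card - j) else 0) := by
      intro A hA
      rw [mem_powersetCard] at hA
      rw [card_sdiff_of_subset hA.1, hA.2]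
    rw [sum_congr rfl this, sum_const, card_powersetCard, nsmul_eq_mul]
  rw [sum_congr rfl step1]
  by_cases h : T ≤ S.card
  · rw [if_pos h]
    have hfil : (range (S.card + 1)).filter (fun j => T ≤ j) = Icc T S.card := by
      ext a; simp [Nat.lt_succ_iff]; omega
    rw [show (∑ j ∈ range (S.card + 1), (S.card.choose j : ℝ) *
          (if T ≤ j then ((-1:ℝ))^(S.card - j) else 0))
        = ∑ j ∈ (range (S.card + 1)).filter (fun j => T ≤ j),
            (S.card.choose j : ℝ) * ((-1:ℝ))^(S.card - j) by
      rw [sum_filter]; exact sum_congr rfl fun j _ => by split <;> simp]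
    rw [hfil]
    have : ∀ j ∈ Icc T S.card, (S.card.choose j : ℝ) * ((-1:ℝ))^(S.card - j)
        = (-1:ℝ)^S.card * ((-1:ℝ)^j * (S.card.choose j : ℝ)) := by
      intro j hj
      rw [mem_Icc] at hj
      have : ((-1:ℝ))^(S.card - j) * ((-1:ℝ))^j = ((-1:ℝ))^S.card := by
        rw [← pow_add]; congr 1; omega
      have hsq : ((-1:ℝ))^j * ((-1:ℝ))^j = 1 := by
        rw [← pow_add]; exact Even.neg_one_pow ⟨j, rfl⟩
      calc (S.card.choose j : ℝ) * ((-1:ℝ))^(S.card - j)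
          = (S.card.choose j : ℝ) * (((-1:ℝ))^(S.card - j) *
              (((-1:ℝ))^j * ((-1:ℝ))^j)) := by rw [hsq]; ring
        _ = (-1:ℝ)^S.card * ((-1:ℝ)^j * (S.card.choose j : ℝ)) := by
            rw [← mul_assoc (((-1:ℝ))^(S.card - j)), this]; ring
    rw [sum_congr rfl this, ← mul_sum, dep_alt_tail S.card T hT1 h, pow_add]
    ring
  · rw [if_neg h]
    apply sum_eq_zero
    intro j hj
    rw [mem_range] at hj
    rw [if_neg (by omega)]
    ring

lemma dep_key_sum (M T : ℕ) (hT1 : 1 ≤ T) (p : Fin M → ℝ) :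
    ∑ A ∈ (univ : Finset (Fin M)).powerset.filter (fun A => T ≤ A.card),
        (∏ m ∈ A, p m) * ∏ m ∈ Aᶜ, (1 - p m)
    = ∑ k ∈ Icc T M, (-1:ℝ)^(k+T) * (((k-1).choose (T-1) : ℕ) : ℝ) * esp M k p := by
  classical
  set F : Finset (Fin M) → Finset (Fin M) → ℝ :=
    fun A B => if T ≤ A.card then ((-1:ℝ))^B.card * ∏ m ∈ A ∪ B, p m else 0 with hF
  have expand : ∀ A : Finset (Fin M),
      (if T ≤ A.card then (∏ m ∈ A, p m) * ∏ m ∈ Aᶜ, (1 - p m) else 0)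
        = ∑ B ∈ (Aᶜ : Finset (Fin M)).powerset, F A B := by
    intro A
    have h1 : ∏ m ∈ (Aᶜ : Finset (Fin M)), (1 - p m)
        = ∑ B ∈ (Aᶜ : Finset (Fin M)).powerset, ((-1:ℝ))^B.card * ∏ m ∈ B, p m := by
      have : ∀ m ∈ (Aᶜ : Finset (Fin M)), (1 - p m) = (-p m) + 1 := fun m _ => by ring
      rw [prod_congr rfl this, prod_add]
      refine sum_congr rfl fun B _ => ?_
      rw [prod_const_one, mul_one]
      have : ∀ m ∈ B, -p m = (-1) * p m := fun m _ => by ring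
      rw [prod_congr rfl this, prod_mul_distrib, prod_const]
    by_cases h : T ≤ A.card
    · rw [if_pos h, h1, mul_sum]
      refine sum_congr rfl fun B hB => ?_
      rw [mem_powerset] at hB
      have hd : Disjoint A B := (disjoint_compl_right.mono_right hB)
      rw [hF]; simp only [if_pos h]
      rw [prod_union hd]; ring
    · rw [if_neg h]
      symm; apply sum_eq_zero; intro B _
      rw [hF]; simp only [if_neg h]
  have step1 : ∑ A ∈ (univ : Finset (Fin M)).powerset.filter (fun A => T ≤ A.card),
        (∏ m ∈ A, p m) * ∏ m ∈ Aᶜ, (1 - p m)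
      = ∑ A ∈ (univ : Finset (Fin M)).powerset, ∑ B ∈ (Aᶜ : Finset (Fin M)).powerset, F A B := by
    rw [sum_filter]; exact sum_congr rfl fun A _ => expand A
  rw [step1]
  have step2 : ∑ A ∈ (univ : Finset (Fin M)).powerset, ∑ B ∈ (Aᶜ : Finset (Fin M)).powerset, F A B
      = ∑ S ∈ (univ : Finset (Fin M)).powerset, ∑ A ∈ S.powerset, F A (S \ A) := by
    rw [sum_sigma', sum_sigma']
    refine sum_nbij' (fun x => ⟨x.1 ∪ x.2, x.1⟩) (fun y => ⟨y.2, y.1 \ y.2⟩) ?_ ?_ ?_ ?_ ?_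
    · rintro ⟨A, B⟩ h
      simp only [mem_sigma, mem_powerset] at h ⊢
      exact ⟨subset_univ _, subset_union_left⟩
    · rintro ⟨S, A⟩ h
      simp only [mem_sigma, mem_powerset] at h ⊢
      refine ⟨subset_univ _, ?_⟩
      intro x hx
      rw [mem_sdiff] at hx
      simp [hx.2]
    · rintro ⟨A, B⟩ h
      simp only [mem_sigma, mem_powerset] at h
      have hd : Disjoint A B := disjoint_compl_right.mono_right h.2
      simp [union_sdiff_cancel_left hd]
    · rintro ⟨S, A⟩ h
      simp only [mem_sigma, mem_powerset] at h
      simp [union_sdiff_of_subset h.2]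
    · rintro ⟨A, B⟩ h
      simp only [mem_sigma, mem_powerset] at h
      have hd : Disjoint A B := disjoint_compl_right.mono_right h.2
      simp only []
      rw [union_sdiff_cancel_left hd]
  rw [step2]
  have step3 : ∀ S ∈ (univ : Finset (Fin M)).powerset,
      ∑ A ∈ S.powerset, F A (S \ A)
        = (if T ≤ S.card then (-1:ℝ)^(S.card + T) * ((S.card - 1).choose (T-1) : ℝ) else 0)
            * ∏ m ∈ S, p m := by
    intro S _
    have : ∀ A ∈ S.powerset, F A (S \ A)
        = (if T ≤ A.card then ((-1:ℝ))^((S \ A).card) else 0) * ∏ m ∈ S, p m := by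
      intro A hA
      rw [mem_powerset] at hA
      rw [hF]
      simp only [union_sdiff_of_subset hA]
      split <;> ring
    rw [sum_congr rfl this, ← sum_mul, dep_inner_sum T hT1 S]
  rw [sum_congr rfl step3]
  rw [Finset.sum_powerset]
  have hc : (univ : Finset (Fin M)).card = M := by simp
  rw [hc]
  have step4 : ∀ j ∈ range (M+1),
      ∑ S ∈ (univ : Finset (Fin M)).powersetCard j,
        (if T ≤ S.card then (-1:ℝ)^(S.card + T) * ((S.card - 1).choose (T-1) : ℝ) else 0)
          * ∏ m ∈ S, p m
      = (if T ≤ j then (-1:ℝ)^(j + T) * ((j - 1).choose (T-1) : ℝ) else 0) * esp M j p := by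
    intro j _
    rw [esp, mul_sum]
    refine sum_congr rfl fun S hS => ?_
    rw [mem_powersetCard] at hS
    rw [hS.2]
  rw [sum_congr rfl step4]
  rw [← Finset.sum_subset (s₁ := Icc T M) (h := fun a ha => by
    rw [mem_Icc] at ha; rw [mem_range]; omega)]
  · refine sum_congr rfl fun k hk => ?_
    rw [mem_Icc] at hk
    rw [if_pos hk.1]
  · intro j hj hj2
    rw [mem_range] at hj; rw [mem_Icc] at hj2
    rw [if_neg (by omega), zero_mul]

/-- in the perfect-detection regime (`P_md,m = 0` for all wardens), the
system detection error probability reduces to the majority-rule false-alarm tail, with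
closed-form ESP representation. -/
theorem dep_perfect_detection {Ω : Type*} [MeasurableSpace Ω]
    (μ : Measure Ω) [IsProbabilityMeasure μ]
    (M : ℕ) (hM : 1 ≤ M) (T : ℕ) (hT : T = M / 2 + 1)
    (X Y : Fin M → Ω → ℕ)
    (hXmeas : ∀ m, Measurable (X m)) (hYmeas : ∀ m, Measurable (Y m))
    (hXval : ∀ m ω, X m ω ≤ 1) (hYval : ∀ m ω, Y m ω ≤ 1)
    (hXindep : iIndepFun X μ)
    (hYindep : iIndepFun Y μ)
    (pfa pmd : Fin M → ℝ)
    (hpfa : ∀ m, (μ {ω | X m ω = 1}).toReal = pfa m)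
    (hpmd : ∀ m, (μ {ω | Y m ω = 1}).toReal = 1 - pmd m)
    (hmd0 : ∀ m, pmd m = 0) :
    (μ {ω | T ≤ ∑ m, X m ω}).toReal + (μ {ω | ∑ m, Y m ω ≤ T - 1}).toReal =
      ∑ k ∈ Finset.Icc T M,
        (-1 : ℝ) ^ (k + T) * (Nat.choose (k - 1) (T - 1) : ℝ) * esp M k pfa := by
  classical
  have hT1 : 1 ≤ T := by omega
  -- The Y part vanishes
  have hYzero : (μ {ω | ∑ m, Y m ω ≤ T - 1}).toReal = 0 := by
    have hYm : ∀ m, μ {ω | Y m ω = 1} = 1 := by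
      intro m
      have h1 := hpmd m
      rw [hmd0 m, sub_zero] at h1
      have hfin : μ {ω | Y m ω = 1} ≠ ⊤ := measure_ne_top μ _
      rw [← ENNReal.ofReal_toReal hfin, h1, ENNReal.ofReal_one]
    have hcompl : ∀ m, μ ({ω | Y m ω = 1}ᶜ) = 0 := by
      intro m
      have hms : MeasurableSet {ω | Y m ω = 1} := hYmeas m (measurableSet_singleton 1)
      rw [measure_compl hms (measure_ne_top μ _), hYm m, measure_univ, tsub_self]
    have hsub : {ω | ∑ m, Y m ω ≤ T - 1} ⊆ ⋃ m, ({ω | Y m ω = 1}ᶜ) := by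
      intro ω hω
      by_contra hc
      simp only [Set.mem_iUnion, Set.mem_compl_iff, Set.mem_setOf_eq, not_exists, not_not] at hc
      have hsum : ∑ m, Y m ω = M := by
        rw [Finset.sum_congr rfl (fun m _ => hc m), Finset.sum_const, card_univ,
          Fintype.card_fin, smul_eq_mul, mul_one]
      simp only [Set.mem_setOf_eq, hsum] at hω
      omega
    have h0 : μ {ω | ∑ m, Y m ω ≤ T - 1} = 0 := by
      refine le_antisymm (le_trans (measure_mono hsub) ?_) (zero_le)
      refine le_trans (measure_iUnion_le _) ?_
      simp [hcompl]
    rw [h0, ENNReal.toReal_zero]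
  rw [hYzero, add_zero]
  -- The X part
  set c : Finset (Fin M) → Fin M → ℕ := fun A m => if m ∈ A then 1 else 0 with hc
  set E : Finset (Fin M) → Set Ω := fun A => ⋂ m, X m ⁻¹' {c A m} with hE
  have hmemE : ∀ A ω, ω ∈ E A ↔ ∀ m, X m ω = c A m := by
    intro A ω
    simp [hE, Set.mem_iInter]
  have hEmeas : ∀ A, MeasurableSet (E A) :=
    fun A => MeasurableSet.iInter fun m => hXmeas m (measurableSet_singleton _)
  set s : Finset (Finset (Fin M)) :=
    (univ : Finset (Fin M)).powerset.filter (fun A => T ≤ A.card) with hs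
  have hset : {ω | T ≤ ∑ m, X m ω} = ⋃ A ∈ s, E A := by
    ext ω
    simp only [Set.mem_setOf_eq, Set.mem_iUnion, exists_prop]
    constructor
    · intro hω
      refine ⟨univ.filter (fun m => X m ω = 1), ?_, ?_⟩
      · rw [hs, mem_filter, mem_powerset]
        refine ⟨subset_univ _, ?_⟩
        have : ∑ m, X m ω = (univ.filter (fun m => X m ω = 1)).card := by
          rw [Finset.card_filter]
          refine Finset.sum_congr rfl fun m _ => ?_
          have := hXval m ω
          by_cases h : X m ω = 1
          · simp [h]
          · have h0 : X m ω = 0 := by omega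
            simp [h, h0]
        omega
      · rw [hmemE]
        intro m
        rw [hc]
        simp only [mem_filter, mem_univ, true_and]
        have := hXval m ω
        by_cases h : X m ω = 1
        · simp [h]
        · have h0 : X m ω = 0 := by omega
          simp [h, h0]
    · rintro ⟨A, hA, hωA⟩
      rw [hs, mem_filter] at hA
      rw [hmemE] at hωA
      have : ∑ m, X m ω = A.card := by
        rw [Finset.sum_congr rfl (fun m _ => hωA m), hc]
        simp only
        rw [Finset.sum_ite_mem, Finset.univ_inter, Finset.sum_const, smul_eq_mul, mul_one]
      omega
  have hdisj : (s : Set (Finset (Fin M))).PairwiseDisjoint E := by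
    intro A _ B _ hAB
    refine Set.disjoint_left.2 fun ω hωA hωB => hAB ?_
    rw [hmemE] at hωA hωB
    ext m
    constructor
    · intro hm
      by_contra hm'
      have h1 := hωA m; have h2 := hωB m
      rw [hc] at h1 h2
      simp [hm] at h1
      simp [hm'] at h2
      omega
    · intro hm
      by_contra hm'
      have h1 := hωA m; have h2 := hωB m
      rw [hc] at h1 h2
      simp [hm] at h2
      simp [hm'] at h1
      omega
  have hmu : μ {ω | T ≤ ∑ m, X m ω} = ∑ A ∈ s, μ (E A) := by
    rw [hset, measure_biUnion_finset hdisj (fun A _ => hEmeas A)]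
  have hEA : ∀ A, μ (E A) = ∏ m, μ (X m ⁻¹' {c A m}) := by
    intro A
    exact hXindep.meas_iInter (fun m => ⟨{c A m}, measurableSet_singleton _, rfl⟩)
  have hXreal : ∀ A (m : Fin M), (μ (X m ⁻¹' {c A m})).toReal
      = if m ∈ A then pfa m else 1 - pfa m := by
    intro A m
    by_cases h : m ∈ A
    · have hc1 : c A m = 1 := by simp [hc, h]
      rw [hc1, if_pos h]
      exact hpfa m
    · have hc0 : c A m = 0 := by simp [hc, h]
      rw [hc0, if_neg h]
      have hpre : X m ⁻¹' ({0} : Set ℕ) = {ω | X m ω = 1}ᶜ := by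
        ext ω
        simp only [Set.mem_preimage, Set.mem_singleton_iff, Set.mem_compl_iff, Set.mem_setOf_eq]
        have := hXval m ω
        omega
      have hms : MeasurableSet {ω | X m ω = 1} := hXmeas m (measurableSet_singleton 1)
      rw [hpre, measure_compl hms (measure_ne_top μ _), measure_univ]
      rw [ENNReal.toReal_sub_of_le prob_le_one ENNReal.one_ne_top, ENNReal.toReal_one, hpfa m]
  have hmain : (μ {ω | T ≤ ∑ m, X m ω}).toReal
      = ∑ A ∈ s, (∏ m ∈ A, pfa m) * ∏ m ∈ Aᶜ, (1 - pfa m) := by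
    rw [hmu, ENNReal.toReal_sum (fun A _ => measure_ne_top μ _)]
    refine sum_congr rfl fun A _ => ?_
    rw [hEA A, ENNReal.toReal_prod]
    rw [Finset.prod_congr rfl (fun m _ => hXreal A m)]
    rw [Finset.prod_ite]
    congr 1
    · apply Finset.prod_congr _ (fun _ _ => rfl)
      ext m; simp
    · apply Finset.prod_congr _ (fun _ _ => rfl)
      ext m; simp
  rw [hmain, hs]
  exact dep_key_sum M T hT1 pfa
end
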